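/- Let Z = f(X, X̃) where X and X̃ are independent random elements and f is a measurable real-valued function, and let (Z^1, Z^2) = (f(X, X̃), f(X, X̃')) be a Pick-and-Freeze pair, where X̃' is an independent copy of X̃ independent of (X, X̃). Let (Z_1^1, Z_1^2) and (Z_2^1, Z_2^2) be two independent copies of the pair (Z^1, Z^2) and let W be an independent random variable with the law of Z. Then the Cramér–von Mises index D = ∫_ℝ E[(F(t) − F^v(t))²] dF(t) satisfies D = P(Z_1^1 ≤ W, Z_1^2 ≤ W) − P(Z_1^1 ≤ W, Z_2^2 ≤ W). -/

import Mathlib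

open MeasureTheory ProbabilityTheory Filter
open scoped ENNReal

lemma integrable_toReal_of_le_one {α : Type*} [MeasurableSpace α] (μ : Measure α)
    [IsFiniteMeasure μ] {g : α → ℝ≥0∞} (hg : AEMeasurable g μ) (hle : ∀ x, g x ≤ 1) :
    Integrable (fun x => (g x).toReal) μ := by
  refine Integrable.mono' (integrable_const 1)
    (ENNReal.measurable_toReal.comp_aemeasurable hg).aestronglyMeasurable
    (Eventually.of_forall fun x => ?_)
  rw [Real.norm_eq_abs, abs_of_nonneg ENNReal.toReal_nonneg]
  simpa using ENNReal.toReal_mono ENNReal.one_ne_top (hle x)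

lemma iIndepFun_congr' {ι Ω : Type*} {β : ι → Type*} [MeasurableSpace Ω]
    {m : ∀ i, MeasurableSpace (β i)} {μ : Measure Ω} {f g : ∀ i, Ω → β i}
    (h : ∀ i, f i =ᵐ[μ] g i) (hf : iIndepFun (m := m) f μ) : iIndepFun (m := m) g μ := by
  rw [iIndepFun_iff_measure_inter_preimage_eq_mul] at hf ⊢
  intro S sets hsets
  have h2 : ∀ᵐ ω ∂μ, ∀ i ∈ (↑S : Set ι), (g i ω ∈ sets i ↔ f i ω ∈ sets i) := by
    rw [MeasureTheory.ae_ball_iff S.countable_toSet]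
    intro i _
    exact (h i).mono fun ω hω => by rw [hω]
  have hInter : μ (⋂ i ∈ S, g i ⁻¹' sets i) = μ (⋂ i ∈ S, f i ⁻¹' sets i) := by
    apply measure_congr
    rw [Filter.eventuallyEq_set]
    refine h2.mono fun ω hω => ?_
    simp only [Set.mem_iInter, Set.mem_preimage]
    exact forall₂_congr fun i hi => hω i hi
  have hfac : ∀ i ∈ S, μ (g i ⁻¹' sets i) = μ (f i ⁻¹' sets i) := by
    intro i hi
    apply measure_congr
    rw [Filter.eventuallyEq_set]
    exact (h i).mono fun ω hω => by simp only [Set.mem_preimage]; rw [hω]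
  rw [hInter, hf S hsets]
  exact (Finset.prod_congr rfl hfac).symm

/-- **Pick-and-Freeze representation of the Cramér–von Mises index.** With
`(Z^1, Z^2) = (f(X, X̃), f(X, X̃'))` the Pick-and-Freeze pair, `(Z_1^1, Z_1^2)` and
`(Z_2^1, Z_2^2)` two independent copies of it, and `W` an independent variable with
the law of `Z`, one has `D = P(Z_1^1 ≤ W, Z_1^2 ≤ W) − P(Z_1^1 ≤ W, Z_2^2 ≤ W)`. -/
theorem cramer_von_mises_pick_and_freeze_representation
    {Ω : Type*} {E E' : Type u} [m0 : MeasurableSpace Ω] [mE : MeasurableSpace E]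
    [mE' : MeasurableSpace E'] (P : Measure Ω) [IsProbabilityMeasure P]
    (X : Ω → E) (Xt Xt' : Ω → E')
    (hX : Measurable X) (hXt : Measurable Xt) (hXt' : Measurable Xt')
    (hindep : iIndepFun
      (β := fun i : Option (Fin 2) => Option.elim i E fun _ => E')
      (m := fun i => match i with | none => mE | some _ => mE')
      (fun i => match i with | none => X | some j => (if j = 0 then Xt else Xt')) P)
    (hid : Measure.map Xt' P = Measure.map Xt P)
    (f : E × E' → ℝ) (hf : Measurable f)
    (Z Z2 : Ω → ℝ) (hZdef : ∀ ω, Z ω = f (X ω, Xt ω))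
    (hZ2def : ∀ ω, Z2 ω = f (X ω, Xt' ω))
    -- the distribution function of `Z`, the conditional one given `X`, and the index
    (F : ℝ → ℝ) (hF : ∀ t, F t = (P {ω | Z ω ≤ t}).toReal)
    (Fv : ℝ → Ω → ℝ)
    (hFv : ∀ t, Fv t = MeasureTheory.condExp (MeasurableSpace.comap X mE) P
      (Set.indicator {ω | Z ω ≤ t} fun _ => (1 : ℝ)))
    (D : ℝ) (hD : D = ∫ t, (∫ ω, (F t - Fv t ω) ^ 2 ∂P) ∂(Measure.map Z P))
    -- two independent copies of the Pick-and-Freeze pair and an independent `W`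
    (pair : Fin 2 → Ω → ℝ × ℝ) (W : Ω → ℝ)
    (hcopies : iIndepFun
      (β := fun i : Option (Fin 2) => Option.elim i ℝ fun _ => ℝ × ℝ)
      (m := fun i => match i with
        | none => inferInstanceAs (MeasurableSpace ℝ)
        | some _ => inferInstanceAs (MeasurableSpace (ℝ × ℝ)))
      (fun i => match i with | none => W | some j => pair j) P)
    (hpairlaw : ∀ j, Measure.map (pair j) P = Measure.map (fun ω => (Z ω, Z2 ω)) P)
    (hWlaw : Measure.map W P = Measure.map Z P) :
    D = (P {ω | (pair 0 ω).1 ≤ W ω ∧ (pair 0 ω).2 ≤ W ω}).toReal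
      - (P {ω | (pair 0 ω).1 ≤ W ω ∧ (pair 1 ω).2 ≤ W ω}).toReal := by
  classical
  -- basic measurability
  have hZfun : Z = fun ω => f (X ω, Xt ω) := funext hZdef
  have hZ2fun : Z2 = fun ω => f (X ω, Xt' ω) := funext hZ2def
  have hZm : Measurable Z := hZfun ▸ hf.comp (hX.prodMk hXt)
  have hZ2m : Measurable Z2 := hZ2fun ▸ hf.comp (hX.prodMk hXt')
  set μX : Measure E := P.map X with hμXdef
  set ν : Measure E' := P.map Xt with hνdef
  set μZ : Measure ℝ := P.map Z with hμZdef
  set κ : Measure (ℝ × ℝ) := P.map (fun ω => (Z ω, Z2 ω)) with hκdef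
  haveI : IsProbabilityMeasure μX := Measure.isProbabilityMeasure_map hX.aemeasurable
  haveI : IsProbabilityMeasure ν := Measure.isProbabilityMeasure_map hXt.aemeasurable
  haveI : IsProbabilityMeasure μZ := Measure.isProbabilityMeasure_map hZm.aemeasurable
  haveI : IsProbabilityMeasure κ :=
    Measure.isProbabilityMeasure_map (hZm.prodMk hZ2m).aemeasurable
  -- independence of (X, Xt, Xt')
  have hmeasfam : ∀ i : Option (Fin 2),
      @Measurable Ω (Option.elim i E fun _ => E') m0
        ((fun i : Option (Fin 2) =>
          (match i with | none => mE | some _ => mE' :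
            MeasurableSpace (Option.elim i E fun _ => E'))) i)
        ((fun i : Option (Fin 2) =>
          (match i with | none => X | some j => (if j = 0 then Xt else Xt') :
            Ω → Option.elim i E fun _ => E')) i) := by
    rintro (_ | j)
    · exact hX
    · fin_cases j
      · exact hXt
      · exact hXt'
  have h0 : IndepFun X Xt P := by
    have h := hindep.indepFun (i := none) (j := some 0) (by simp)
    simpa using h
  have h1 : IndepFun X Xt' P := by
    have h := hindep.indepFun (i := none) (j := some 1) (by simp)
    simpa using h
  have hTT : IndepFun Xt Xt' P := by
    have h := hindep.indepFun (i := some 0) (j := some 1) (by simp)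
    simpa using h
  have hindX_TT : IndepFun X (fun ω => (Xt ω, Xt' ω)) P := by
    have h := hindep.indepFun_prodMk hmeasfam (some 0) (some 1) none (by simp) (by simp)
    exact h.symm
  have hmapXXt : P.map (fun ω => (X ω, Xt ω)) = μX.prod ν :=
    (indepFun_iff_map_prod_eq_prod_map_map hX.aemeasurable hXt.aemeasurable).mp h0
  have hmapXXt' : P.map (fun ω => (X ω, Xt' ω)) = μX.prod ν := by
    rw [(indepFun_iff_map_prod_eq_prod_map_map hX.aemeasurable hXt'.aemeasurable).mp h1, hid]
  have hmapTT : P.map (fun ω => (Xt ω, Xt' ω)) = ν.prod ν := by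
    rw [(indepFun_iff_map_prod_eq_prod_map_map hXt.aemeasurable hXt'.aemeasurable).mp hTT, hid]
  have hmapT : P.map (fun ω => (X ω, (Xt ω, Xt' ω))) = μX.prod (ν.prod ν) := by
    rw [(indepFun_iff_map_prod_eq_prod_map_map hX.aemeasurable
      (hXt.prodMk hXt').aemeasurable).mp hindX_TT, hmapTT]
  -- law of Z2
  have hlawZ2 : P.map Z2 = μZ := by
    have e1 : P.map Z2 = (P.map (fun ω => (X ω, Xt' ω))).map f := by
      rw [Measure.map_map hf (hX.prodMk hXt')]; rw [hZ2fun]; rfl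
    have e2 : μZ = (P.map (fun ω => (X ω, Xt ω))).map f := by
      rw [Measure.map_map hf (hX.prodMk hXt)]; rw [hμZdef, hZfun]; rfl
    rw [e1, e2, hmapXXt, hmapXXt']
  -- the conditional distribution function
  set G : ℝ → E → ℝ≥0∞ := fun t x => ν {y | f (x, y) ≤ t} with hGdef
  have hGmeas : ∀ t, Measurable (G t) := by
    intro t
    have hs : MeasurableSet {p : E × E' | f p ≤ t} := hf measurableSet_Iic
    exact measurable_measure_prodMk_left hs
  have hGle1 : ∀ t x, G t x ≤ 1 := fun t x => prob_le_one
  have hPZ : ∀ t, P {ω | Z ω ≤ t} = ∫⁻ x, G t x ∂μX := by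
    intro t
    have hs : MeasurableSet {p : E × E' | f p ≤ t} := hf measurableSet_Iic
    have hpre : {ω | Z ω ≤ t} = (fun ω => (X ω, Xt ω)) ⁻¹' {p : E × E' | f p ≤ t} := by
      ext ω; simp [hZdef ω]
    rw [hpre, ← Measure.map_apply (hX.prodMk hXt) hs, hmapXXt, Measure.prod_apply hs]
    rfl
  have hPZZ2 : ∀ t, P {ω | Z ω ≤ t ∧ Z2 ω ≤ t} = ∫⁻ x, G t x * G t x ∂μX := by
    intro t
    have hm1 : Measurable fun q : E × (E' × E') => f (q.1, q.2.1) :=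
      hf.comp (measurable_fst.prodMk (measurable_fst.comp measurable_snd))
    have hm2 : Measurable fun q : E × (E' × E') => f (q.1, q.2.2) :=
      hf.comp (measurable_fst.prodMk (measurable_snd.comp measurable_snd))
    have hs : MeasurableSet {q : E × (E' × E') | f (q.1, q.2.1) ≤ t ∧ f (q.1, q.2.2) ≤ t} :=
      (hm1 measurableSet_Iic).inter (hm2 measurableSet_Iic)
    have hpre : {ω | Z ω ≤ t ∧ Z2 ω ≤ t} = (fun ω => (X ω, (Xt ω, Xt' ω))) ⁻¹'
        {q : E × (E' × E') | f (q.1, q.2.1) ≤ t ∧ f (q.1, q.2.2) ≤ t} := by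
      ext ω; simp [hZdef ω, hZ2def ω]
    rw [hpre, ← Measure.map_apply (hX.prodMk (hXt.prodMk hXt')) hs, hmapT,
      Measure.prod_apply hs]
    refine lintegral_congr fun x => ?_
    have hx : (Prod.mk x ⁻¹' {q : E × (E' × E') | f (q.1, q.2.1) ≤ t ∧ f (q.1, q.2.2) ≤ t})
        = {y | f (x, y) ≤ t} ×ˢ {y | f (x, y) ≤ t} := by
      ext yz; simp [Set.mem_prod]
    rw [hx, Measure.prod_prod]
  -- identification of the conditional distribution function
  have hmle : MeasurableSpace.comap X mE ≤ m0 := hX.comap_le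
  haveI : SigmaFinite (P.trim hmle) := by infer_instance
  have hgm : ∀ t, Measurable fun x => (G t x).toReal := fun t => (hGmeas t).ennreal_toReal
  have hFveq : ∀ t, Fv t =ᵐ[P] fun ω => (G t (X ω)).toReal := by
    intro t
    rw [hFv t]
    have hsZ : MeasurableSet {ω | Z ω ≤ t} := hZm measurableSet_Iic
    have hglob : Integrable (fun ω => (G t (X ω)).toReal) P := by
      have := integrable_toReal_of_le_one P (g := fun ω => G t (X ω))
        ((hGmeas t).comp hX).aemeasurable (fun ω => hGle1 t (X ω))
      exact this
    refine (ae_eq_condExp_of_forall_setIntegral_eq hmle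
      ((integrable_const (1:ℝ)).indicator hsZ)
      (fun s hs hμs => hglob.integrableOn)
      (fun s hs hμs => ?_) ?_).symm
    · obtain ⟨A, hA, rfl⟩ := hs
      have hL : ∫ ω in X ⁻¹' A, (G t (X ω)).toReal ∂P = ∫ x in A, (G t x).toReal ∂μX :=
        (setIntegral_map hA (hgm t).aestronglyMeasurable hX.aemeasurable).symm
      have hL2 : ∫ x in A, (G t x).toReal ∂μX = (∫⁻ x in A, G t x ∂μX).toReal :=
        integral_toReal ((hGmeas t).aemeasurable.restrict)
          (Eventually.of_forall fun x => lt_of_le_of_lt (hGle1 t x) ENNReal.one_lt_top)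
      have hR : ∫ ω in X ⁻¹' A, Set.indicator {ω | Z ω ≤ t} (fun _ => (1:ℝ)) ω ∂P
          = (P ({ω | Z ω ≤ t} ∩ X ⁻¹' A)).toReal := by
        rw [integral_indicator hsZ, setIntegral_const, measureReal_def, Measure.restrict_apply hsZ,
          smul_eq_mul, mul_one]
      have hkey : P ({ω | Z ω ≤ t} ∩ X ⁻¹' A) = ∫⁻ x in A, G t x ∂μX := by
        have hsp : MeasurableSet ((A ×ˢ (Set.univ : Set E')) ∩ {p : E × E' | f p ≤ t}) :=
          (hA.prod MeasurableSet.univ).inter (hf measurableSet_Iic)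
        have hpre : {ω | Z ω ≤ t} ∩ X ⁻¹' A
            = (fun ω => (X ω, Xt ω)) ⁻¹' ((A ×ˢ (Set.univ : Set E')) ∩ {p : E × E' | f p ≤ t}) := by
          ext ω; simp [hZdef ω, Set.mem_prod, and_comm]
        rw [hpre, ← Measure.map_apply (hX.prodMk hXt) hsp, hmapXXt, Measure.prod_apply hsp,
          ← lintegral_indicator hA]
        refine lintegral_congr fun x => ?_
        by_cases hx : x ∈ A
        · rw [Set.indicator_of_mem hx]
          congr 1
          ext y; simp [hx]
        · rw [Set.indicator_of_notMem hx]
          have hempty : Prod.mk x ⁻¹' ((A ×ˢ (Set.univ : Set E')) ∩ {p : E × E' | f p ≤ t})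
              = ∅ := by
            ext y; simp [hx]
          rw [hempty, measure_empty]
      rw [hL, hL2, hR, hkey]
    · exact StronglyMeasurable.aestronglyMeasurable
        (Measurable.stronglyMeasurable
          ((hgm t).comp (Measurable.of_comap_le le_rfl)))
  -- the inner integral
  have hgint : ∀ t, Integrable (fun x => (G t x).toReal) μX := fun t =>
    integrable_toReal_of_le_one μX (hGmeas t).aemeasurable (hGle1 t)
  have hg2int : ∀ t, Integrable (fun x => (G t x).toReal ^ 2) μX := by
    intro t
    refine Integrable.mono' (integrable_const 1)
      (((hgm t).pow_const 2).aestronglyMeasurable) (Eventually.of_forall fun x => ?_)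
    rw [Real.norm_eq_abs, abs_of_nonneg (by positivity)]
    have h1 : (G t x).toReal ≤ 1 := by
      simpa using ENNReal.toReal_mono ENNReal.one_ne_top (hGle1 t x)
    nlinarith [ENNReal.toReal_nonneg (a := G t x)]
  have hgtF : ∀ t, ∫ x, (G t x).toReal ∂μX = F t := by
    intro t
    rw [integral_toReal (hGmeas t).aemeasurable
      (Eventually.of_forall fun x => lt_of_le_of_lt (hGle1 t x) ENNReal.one_lt_top),
      hF t, hPZ t]
  have hg2A : ∀ t, ∫ x, (G t x).toReal ^ 2 ∂μX = (P {ω | Z ω ≤ t ∧ Z2 ω ≤ t}).toReal := by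
    intro t
    have h1 : ∀ x, (G t x).toReal ^ 2 = ((G t x) * (G t x)).toReal := fun x => by
      rw [ENNReal.toReal_mul]; ring
    simp_rw [h1]
    rw [integral_toReal (f := fun x => G t x * G t x) ((hGmeas t).mul (hGmeas t)).aemeasurable
      (Eventually.of_forall fun x => ?_), hPZZ2 t]
    exact lt_of_le_of_lt (mul_le_one' (hGle1 t x) (hGle1 t x)) ENNReal.one_lt_top
  have hInner : ∀ t, ∫ ω, (F t - Fv t ω) ^ 2 ∂P
      = (P {ω | Z ω ≤ t ∧ Z2 ω ≤ t}).toReal - (F t) ^ 2 := by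
    intro t
    have h1 : ∫ ω, (F t - Fv t ω) ^ 2 ∂P = ∫ ω, (F t - (G t (X ω)).toReal) ^ 2 ∂P :=
      integral_congr_ae ((hFveq t).mono fun ω h => by dsimp only; rw [h])
    have h2 : ∫ ω, (F t - (G t (X ω)).toReal) ^ 2 ∂P
        = ∫ x, (F t - (G t x).toReal) ^ 2 ∂μX :=
      (integral_map hX.aemeasurable
        (((measurable_const.sub ((hGmeas t).ennreal_toReal)).pow_const 2).aestronglyMeasurable)).symm
    rw [h1, h2]
    have h3 : (fun x => (F t - (G t x).toReal) ^ 2)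
        = fun x => (F t ^ 2 - 2 * F t * (G t x).toReal) + (G t x).toReal ^ 2 :=
      funext fun x => by ring
    have hi1 : Integrable (fun x => F t ^ 2 - 2 * F t * (G t x).toReal) μX := by
      exact (integrable_const _).sub ((hgint t).const_mul _)
    have hi2 : Integrable (fun x : E => F t ^ 2) μX := integrable_const _
    have hi3 : Integrable (fun x => 2 * F t * (G t x).toReal) μX := (hgint t).const_mul _
    rw [h3, integral_add hi1 (hg2int t), integral_sub hi2 hi3, integral_const,
      integral_const_mul, hgtF t, hg2A t]
    simp only [measureReal_def, measure_univ, ENNReal.toReal_one, smul_eq_mul, one_mul]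
    ring
  -- a.e.-measurable modifications of the copies
  have haeW : AEMeasurable W P := by
    by_contra h
    have h0' := Measure.map_of_not_aemeasurable h
    have h1' : (Measure.map W P) Set.univ = 1 := by rw [hWlaw]; exact measure_univ
    rw [h0'] at h1'; simp at h1'
  have haepair : ∀ j, AEMeasurable (pair j) P := by
    intro j
    by_contra h
    have h0' := Measure.map_of_not_aemeasurable h
    have h1' : (Measure.map (pair j) P) Set.univ = 1 := by rw [hpairlaw j]; exact measure_univ
    rw [h0'] at h1'; simp at h1'
  obtain ⟨W', hW'm, hW'ae⟩ := haeW
  obtain ⟨p0, hp0m, hp0ae⟩ := haepair 0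
  obtain ⟨p1, hp1m, hp1ae⟩ := haepair 1
  have hcopies' : iIndepFun
      (β := fun i : Option (Fin 2) => Option.elim i ℝ fun _ => ℝ × ℝ)
      (m := fun i => match i with
        | none => inferInstanceAs (MeasurableSpace ℝ)
        | some _ => inferInstanceAs (MeasurableSpace (ℝ × ℝ)))
      (fun i : Option (Fin 2) =>
        (match i with | none => W' | some j => if j = 0 then p0 else p1 :
          Ω → Option.elim i ℝ fun _ => ℝ × ℝ)) P := by
    refine iIndepFun_congr' ?_ hcopies
    rintro (_ | j)
    · exact hW'ae
    · fin_cases j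
      · simpa using hp0ae
      · simpa using hp1ae
  have hmeasfam' : ∀ i : Option (Fin 2),
      @Measurable Ω (Option.elim i ℝ fun _ => ℝ × ℝ) m0
        ((fun i : Option (Fin 2) => (match i with
          | none => inferInstanceAs (MeasurableSpace ℝ)
          | some _ => inferInstanceAs (MeasurableSpace (ℝ × ℝ)) :
            MeasurableSpace (Option.elim i ℝ fun _ => ℝ × ℝ))) i)
        ((fun i : Option (Fin 2) =>
          (match i with | none => W' | some j => if j = 0 then p0 else p1 :
            Ω → Option.elim i ℝ fun _ => ℝ × ℝ)) i) := by
    rintro (_ | j)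
    · exact hW'm
    · fin_cases j
      · exact hp0m
      · exact hp1m
  have hW'law : Measure.map W' P = μZ := by
    rw [← Measure.map_congr hW'ae, hWlaw]
  have hp0law : Measure.map p0 P = κ := by
    rw [← Measure.map_congr hp0ae, hpairlaw 0]
  have hp1law : Measure.map p1 P = κ := by
    rw [← Measure.map_congr hp1ae, hpairlaw 1]
  -- joint laws of the copies
  have hiW0 : IndepFun W' p0 P := by
    have h := hcopies'.indepFun (i := none) (j := some 0) (by simp)
    exact h
  have hi01 : IndepFun p0 p1 P := by
    have h := hcopies'.indepFun (i := some 0) (j := some 1) (by simp)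
    exact h
  have hiWpp : IndepFun W' (fun ω => (p0 ω, p1 ω)) P := by
    have h := hcopies'.indepFun_prodMk hmeasfam' (some 0) (some 1) none (by simp) (by simp)
    exact h.symm
  have hmap0 : Measure.map (fun ω => (W' ω, p0 ω)) P = μZ.prod κ := by
    rw [(indepFun_iff_map_prod_eq_prod_map_map hW'm.aemeasurable hp0m.aemeasurable).mp hiW0,
      hW'law, hp0law]
  have hmap01 : Measure.map (fun ω => (p0 ω, p1 ω)) P = κ.prod κ := by
    rw [(indepFun_iff_map_prod_eq_prod_map_map hp0m.aemeasurable hp1m.aemeasurable).mp hi01,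
      hp0law, hp1law]
  have hmapW01 : Measure.map (fun ω => (W' ω, (p0 ω, p1 ω))) P = μZ.prod (κ.prod κ) := by
    rw [(indepFun_iff_map_prod_eq_prod_map_map hW'm.aemeasurable
      (hp0m.prodMk hp1m).aemeasurable).mp hiWpp, hW'law, hmap01]
  -- sections of κ
  have hκ2 : ∀ w : ℝ, κ {p : ℝ × ℝ | p.1 ≤ w ∧ p.2 ≤ w} = P {ω | Z ω ≤ w ∧ Z2 ω ≤ w} := by
    intro w
    rw [hκdef]
    exact Measure.map_apply (s := {p : ℝ × ℝ | p.1 ≤ w ∧ p.2 ≤ w}) (hZm.prodMk hZ2m)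
      ((measurable_fst measurableSet_Iic).inter (measurable_snd measurableSet_Iic))
  have hZ2Z : ∀ w : ℝ, P {ω | Z2 ω ≤ w} = P {ω | Z ω ≤ w} := by
    intro w
    have e1 : P {ω | Z2 ω ≤ w} = (Measure.map Z2 P) (Set.Iic w) := by
      rw [Measure.map_apply hZ2m measurableSet_Iic]; rfl
    have e2 : P {ω | Z ω ≤ w} = μZ (Set.Iic w) := by
      rw [hμZdef, Measure.map_apply hZm measurableSet_Iic]; rfl
    rw [e1, e2, hlawZ2]
  have hκ1 : ∀ w : ℝ, κ {p : ℝ × ℝ | p.1 ≤ w} = P {ω | Z ω ≤ w} := by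
    intro w
    rw [hκdef]
    exact Measure.map_apply (s := {p : ℝ × ℝ | p.1 ≤ w}) (hZm.prodMk hZ2m)
      (measurable_fst measurableSet_Iic)
  have hκ1' : ∀ w : ℝ, κ {p : ℝ × ℝ | p.2 ≤ w} = P {ω | Z ω ≤ w} := by
    intro w
    rw [hκdef, Measure.map_apply (s := {p : ℝ × ℝ | p.2 ≤ w}) (hZm.prodMk hZ2m)
      (measurable_snd measurableSet_Iic)]
    exact hZ2Z w
  -- the two probability terms
  have hs8 : MeasurableSet {q : ℝ × (ℝ × ℝ) | q.2.1 ≤ q.1 ∧ q.2.2 ≤ q.1} :=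
    (measurableSet_le (measurable_fst.comp measurable_snd) measurable_fst).inter
      (measurableSet_le (measurable_snd.comp measurable_snd) measurable_fst)
  have hs9 : MeasurableSet {q : ℝ × ((ℝ × ℝ) × (ℝ × ℝ)) | q.2.1.1 ≤ q.1 ∧ q.2.2.2 ≤ q.1} :=
    (measurableSet_le (measurable_fst.comp (measurable_fst.comp measurable_snd))
        measurable_fst).inter
      (measurableSet_le (measurable_snd.comp (measurable_snd.comp measurable_snd))
        measurable_fst)
  have hterm1 : P {ω | (p0 ω).1 ≤ W' ω ∧ (p0 ω).2 ≤ W' ω}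
      = ∫⁻ w, P {ω | Z ω ≤ w ∧ Z2 ω ≤ w} ∂μZ := by
    have hpre : {ω | (p0 ω).1 ≤ W' ω ∧ (p0 ω).2 ≤ W' ω}
        = (fun ω => (W' ω, p0 ω)) ⁻¹' {q : ℝ × (ℝ × ℝ) | q.2.1 ≤ q.1 ∧ q.2.2 ≤ q.1} := rfl
    rw [hpre, ← Measure.map_apply (hW'm.prodMk hp0m) hs8, hmap0, Measure.prod_apply hs8]
    exact lintegral_congr fun w => hκ2 w
  have hterm2 : P {ω | (p0 ω).1 ≤ W' ω ∧ (p1 ω).2 ≤ W' ω}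
      = ∫⁻ w, P {ω | Z ω ≤ w} * P {ω | Z ω ≤ w} ∂μZ := by
    have hpre : {ω | (p0 ω).1 ≤ W' ω ∧ (p1 ω).2 ≤ W' ω}
        = (fun ω => (W' ω, (p0 ω, p1 ω))) ⁻¹'
          {q : ℝ × ((ℝ × ℝ) × (ℝ × ℝ)) | q.2.1.1 ≤ q.1 ∧ q.2.2.2 ≤ q.1} := rfl
    rw [hpre, ← Measure.map_apply (hW'm.prodMk (hp0m.prodMk hp1m)) hs9, hmapW01,
      Measure.prod_apply hs9]
    refine lintegral_congr fun w => ?_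
    have hsec : (Prod.mk w ⁻¹' {q : ℝ × ((ℝ × ℝ) × (ℝ × ℝ)) | q.2.1.1 ≤ q.1 ∧ q.2.2.2 ≤ q.1})
        = {p : ℝ × ℝ | p.1 ≤ w} ×ˢ {p : ℝ × ℝ | p.2 ≤ w} := by
      ext r; simp [Set.mem_prod]
    rw [hsec, Measure.prod_prod, hκ1 w, hκ1' w]
  -- measurability of the section functions
  have hAm : Measurable (fun w => P {ω | Z ω ≤ w ∧ Z2 ω ≤ w}) := by
    have he : (fun w => P {ω | Z ω ≤ w ∧ Z2 ω ≤ w})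
        = fun w => κ (Prod.mk w ⁻¹' {q : ℝ × (ℝ × ℝ) | q.2.1 ≤ q.1 ∧ q.2.2 ≤ q.1}) := by
      funext w; exact (hκ2 w).symm
    rw [he]
    exact measurable_measure_prodMk_left hs8
  have hBm : Measurable (fun w => P {ω | Z ω ≤ w}) := by
    have hsB : MeasurableSet {q : ℝ × ℝ | q.2 ≤ q.1} :=
      measurableSet_le measurable_snd measurable_fst
    have he : (fun w => P {ω | Z ω ≤ w})
        = fun w => μZ (Prod.mk w ⁻¹' {q : ℝ × ℝ | q.2 ≤ q.1}) := by
      funext w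
      exact (Measure.map_apply (s := Prod.mk w ⁻¹' {q : ℝ × ℝ | q.2 ≤ q.1}) hZm
        measurableSet_Iic).symm
    rw [he]
    exact measurable_measure_prodMk_left hsB
  -- integrability of the two integrands over μZ
  have hAint : Integrable (fun w => (P {ω | Z ω ≤ w ∧ Z2 ω ≤ w}).toReal) μZ :=
    integrable_toReal_of_le_one μZ hAm.aemeasurable (fun w => prob_le_one)
  have hFsq : ∀ w, (F w) ^ 2 = ((P {ω | Z ω ≤ w}) * (P {ω | Z ω ≤ w})).toReal := by
    intro w
    rw [ENNReal.toReal_mul, hF w]; ring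
  have hF2int : Integrable (fun w => (F w) ^ 2) μZ := by
    have := integrable_toReal_of_le_one μZ (hBm.mul hBm).aemeasurable
      (fun w => mul_le_one' prob_le_one prob_le_one)
    exact this.congr (Eventually.of_forall fun w => (hFsq w).symm)
  -- splitting D
  have hDsplit : D = ∫ w, (P {ω | Z ω ≤ w ∧ Z2 ω ≤ w}).toReal ∂μZ
      - ∫ w, (F w) ^ 2 ∂μZ := by
    rw [hD, show (fun t => ∫ ω, (F t - Fv t ω) ^ 2 ∂P)
      = fun t => (P {ω | Z ω ≤ t ∧ Z2 ω ≤ t}).toReal - (F t) ^ 2 from funext hInner]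
    exact integral_sub hAint hF2int
  -- identifying the two integrals with the two probabilities
  have hint1 : ∫ w, (P {ω | Z ω ≤ w ∧ Z2 ω ≤ w}).toReal ∂μZ
      = (P {ω | (p0 ω).1 ≤ W' ω ∧ (p0 ω).2 ≤ W' ω}).toReal := by
    rw [hterm1]
    exact integral_toReal hAm.aemeasurable
      (Eventually.of_forall fun w => measure_lt_top P _)
  have hint2 : ∫ w, (F w) ^ 2 ∂μZ
      = (P {ω | (p0 ω).1 ≤ W' ω ∧ (p1 ω).2 ≤ W' ω}).toReal := by
    rw [hterm2]
    simp_rw [hFsq]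
    exact integral_toReal (hBm.mul hBm).aemeasurable
      (Eventually.of_forall fun w => ENNReal.mul_lt_top (measure_lt_top P _) (measure_lt_top P _))
  -- replacing the modified variables by the original ones
  have hae1 : P {ω | (pair 0 ω).1 ≤ W ω ∧ (pair 0 ω).2 ≤ W ω}
      = P {ω | (p0 ω).1 ≤ W' ω ∧ (p0 ω).2 ≤ W' ω} := by
    apply measure_congr
    rw [Filter.eventuallyEq_set]
    filter_upwards [hW'ae, hp0ae] with ω hw hp
    show ((pair 0 ω).1 ≤ W ω ∧ (pair 0 ω).2 ≤ W ω) ↔ _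
    rw [hw, hp]
  have hae2 : P {ω | (pair 0 ω).1 ≤ W ω ∧ (pair 1 ω).2 ≤ W ω}
      = P {ω | (p0 ω).1 ≤ W' ω ∧ (p1 ω).2 ≤ W' ω} := by
    apply measure_congr
    rw [Filter.eventuallyEq_set]
    filter_upwards [hW'ae, hp0ae, hp1ae] with ω hw hp hq
    show ((pair 0 ω).1 ≤ W ω ∧ (pair 1 ω).2 ≤ W ω) ↔ _
    rw [hw, hp, hq]
  rw [hDsplit, hint1, hint2, hae1, hae2]
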